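/- Let M be a representation of a quiver Q of finite ADE type over a field, decomposed as M(λ) = ⊕_i M(β_i)^{n_i} where the M(β_i) are the indecomposables indexed by positive roots via Gabriel's theorem. If Hom(M(β_k), M(β_l)) = 0 whenever k > l and End(M(β_i)) ≅ k for all i, then the group of units End(M(λ))^× admits a surjective group homomorphism onto ∏_i GL_{n_i}(k) whose kernel is unipotent (consists of elements of the form 1 + n with n nilpotent). -/

import Mathlib

section Aux

variable {k : Type} [Field k] {R : Type} [Ring R] [Algebra k R]
variable {N : ℕ} {M : Fin N → Type}
variable [∀ i, AddCommGroup (M i)] [∀ i, Module R (M i)]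
variable [∀ i, Module k (M i)] [∀ i, IsScalarTower k R (M i)]
variable [∀ i, SMulCommClass R k (M i)]
variable {n : Fin N → ℕ}

/-- The `(i,a),(j,b)` block component of an endomorphism of `Π i, Fin (n i) → M i`. -/
def bcomp (f : Module.End R ((i : Fin N) → Fin (n i) → M i))
    (i j : Fin N) (a : Fin (n i)) (b : Fin (n j)) : M j →ₗ[R] M i where
  toFun x := f (Pi.single j (Pi.single b x)) i a
  map_add' x y := by
    simp only [Pi.single_add, map_add, Pi.add_apply]
  map_smul' r x := by
    simp only [Pi.single_smul, map_smul, Pi.smul_apply, RingHom.id_apply]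

theorem apply_eq_sum (f : Module.End R ((i : Fin N) → Fin (n i) → M i))
    (v : (i : Fin N) → Fin (n i) → M i) (i : Fin N) (a : Fin (n i)) :
    f v i a = ∑ j, ∑ c : Fin (n j), bcomp f i j a c (v j c) := by
  have hv : v = ∑ j, ∑ c : Fin (n j), Pi.single j (Pi.single c (v j c)) := by
    conv_lhs => rw [← Finset.univ_sum_single v]
    refine Finset.sum_congr rfl fun j _ => ?_
    conv_lhs => rw [← Finset.univ_sum_single (v j)]
    exact map_sum (LinearMap.single R (fun i => Fin (n i) → M i) j)
      (fun c => Pi.single c (v j c)) Finset.univ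
  conv_lhs => rw [hv]
  simp only [map_sum, Finset.sum_apply]
  rfl

theorem bcomp_mul (f g : Module.End R ((i : Fin N) → Fin (n i) → M i))
    (i j : Fin N) (a : Fin (n i)) (b : Fin (n j)) (x : M j) :
    bcomp (f * g) i j a b x
      = ∑ l, ∑ c : Fin (n l), bcomp f i l a c (bcomp g l j c b x) :=
  apply_eq_sum f (g (Pi.single j (Pi.single b x))) i a

theorem bcomp_lt (hHom : ∀ i j : Fin N, j < i → ∀ f : M i →ₗ[R] M j, f = 0)
    (f : Module.End R ((i : Fin N) → Fin (n i) → M i))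
    {i j : Fin N} (h : i < j) (a : Fin (n i)) (b : Fin (n j)) :
    bcomp f i j a b = 0 :=
  hHom j i h _

theorem bcomp_sub (f g : Module.End R ((i : Fin N) → Fin (n i) → M i))
    (i j : Fin N) (a : Fin (n i)) (b : Fin (n j)) :
    bcomp (f - g) i j a b = bcomp f i j a b - bcomp g i j a b := by
  ext x
  simp [bcomp]

/-- The scalar entry of a diagonal block. -/
noncomputable def entry
    (hEnd : ∀ i, Function.Bijective
      (fun c : k => (c • (LinearMap.id : Module.End R (M i)))))
    (f : Module.End R ((i : Fin N) → Fin (n i) → M i))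
    (i : Fin N) (a b : Fin (n i)) : k :=
  (Equiv.ofBijective _ (hEnd i)).symm (bcomp f i i a b)

theorem entry_eq
    (hEnd : ∀ i, Function.Bijective
      (fun c : k => (c • (LinearMap.id : Module.End R (M i)))))
    (f : Module.End R ((i : Fin N) → Fin (n i) → M i))
    (i : Fin N) (a b : Fin (n i)) (c : k)
    (h : bcomp f i i a b = c • (LinearMap.id : Module.End R (M i))) :
    entry hEnd f i a b = c := by
  rw [entry, Equiv.symm_apply_eq]
  exact h

theorem bcomp_diag
    (hEnd : ∀ i, Function.Bijective
      (fun c : k => (c • (LinearMap.id : Module.End R (M i)))))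
    (f : Module.End R ((i : Fin N) → Fin (n i) → M i))
    (i : Fin N) (a b : Fin (n i)) :
    bcomp f i i a b = entry hEnd f i a b • (LinearMap.id : Module.End R (M i)) :=
  ((Equiv.ofBijective _ (hEnd i)).apply_symm_apply (bcomp f i i a b)).symm

/-- The block-diagonal matrix of scalars of an endomorphism. -/
noncomputable def Dmap
    (hEnd : ∀ i, Function.Bijective
      (fun c : k => (c • (LinearMap.id : Module.End R (M i)))))
    (f : Module.End R ((i : Fin N) → Fin (n i) → M i)) :
    (i : Fin N) → Matrix (Fin (n i)) (Fin (n i)) k :=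
  fun i => Matrix.of fun a b => entry hEnd f i a b

theorem bcomp_diag_mul
    (hHom : ∀ i j : Fin N, j < i → ∀ f : M i →ₗ[R] M j, f = 0)
    (f g : Module.End R ((i : Fin N) → Fin (n i) → M i))
    (i : Fin N) (a b : Fin (n i)) :
    bcomp (f * g) i i a b
      = ∑ c : Fin (n i), (bcomp f i i a c) ∘ₗ (bcomp g i i c b) := by
  ext x
  rw [LinearMap.sum_apply]
  rw [bcomp_mul]
  rw [Finset.sum_eq_single i]
  · rfl
  · intro l _ hl
    rcases lt_or_gt_of_ne hl with h | h
    · refine Finset.sum_eq_zero fun c _ => ?_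
      rw [bcomp_lt hHom g h]
      simp
    · refine Finset.sum_eq_zero fun c _ => ?_
      rw [bcomp_lt hHom f h]
      simp
  · intro h
    exact absurd (Finset.mem_univ i) h

theorem smul_id_comp_smul_id (i : Fin N) (c d : k) :
    (c • (LinearMap.id : Module.End R (M i))) ∘ₗ (d • LinearMap.id)
      = (c * d) • (LinearMap.id : Module.End R (M i)) := by
  ext x
  simp [smul_smul]

theorem Dmap_mul
    (hEnd : ∀ i, Function.Bijective
      (fun c : k => (c • (LinearMap.id : Module.End R (M i)))))
    (hHom : ∀ i j : Fin N, j < i → ∀ f : M i →ₗ[R] M j, f = 0)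
    (f g : Module.End R ((i : Fin N) → Fin (n i) → M i)) :
    Dmap hEnd (f * g) = Dmap hEnd f * Dmap hEnd g := by
  funext i
  ext a b
  show entry hEnd (f * g) i a b = (Dmap hEnd f i * Dmap hEnd g i) a b
  rw [Matrix.mul_apply]
  apply entry_eq
  rw [bcomp_diag_mul hHom f g i a b, Finset.sum_smul]
  refine Finset.sum_congr rfl fun c _ => ?_
  rw [bcomp_diag hEnd f i a c, bcomp_diag hEnd g i c b, smul_id_comp_smul_id]
  rfl

theorem bcomp_one_diag (i : Fin N) (a b : Fin (n i)) :
    bcomp (1 : Module.End R ((i : Fin N) → Fin (n i) → M i)) i i a b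
      = (if a = b then (1 : k) else 0) • (LinearMap.id : Module.End R (M i)) := by
  ext x
  by_cases h : a = b
  · subst h
    simp [bcomp, Pi.single_eq_same]
  · simp [bcomp, Pi.single_eq_same, Pi.single_eq_of_ne h, h]

theorem Dmap_one
    (hEnd : ∀ i, Function.Bijective
      (fun c : k => (c • (LinearMap.id : Module.End R (M i))))) :
    Dmap hEnd (1 : Module.End R ((i : Fin N) → Fin (n i) → M i)) = 1 := by
  funext i
  ext a b
  show entry hEnd 1 i a b = (1 : Matrix (Fin (n i)) (Fin (n i)) k) a b
  rw [Matrix.one_apply]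
  exact entry_eq hEnd 1 i a b _ (bcomp_one_diag i a b)

/-- Block-diagonal endomorphism attached to a family of matrices. -/
def gmat (B : (i : Fin N) → Matrix (Fin (n i)) (Fin (n i)) k) :
    Module.End R ((i : Fin N) → Fin (n i) → M i) where
  toFun v := fun i a => ∑ b, B i a b • v i b
  map_add' v w := by
    funext i a
    simp [smul_add, Finset.sum_add_distrib]
  map_smul' r v := by
    funext i a
    simp only [Pi.smul_apply, RingHom.id_apply, Finset.smul_sum]
    exact Finset.sum_congr rfl fun b _ => smul_comm (B i a b) r (v i b)

theorem gmat_mul (B C : (i : Fin N) → Matrix (Fin (n i)) (Fin (n i)) k) :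
    (gmat B * gmat C : Module.End R ((i : Fin N) → Fin (n i) → M i))
      = gmat (fun i => B i * C i) := by
  refine LinearMap.ext fun v => ?_
  funext i a
  show ∑ b, B i a b • (∑ c, C i b c • v i c) = ∑ c, (B i * C i) a c • v i c
  simp only [Finset.smul_sum, smul_smul]
  rw [Finset.sum_comm]
  refine Finset.sum_congr rfl fun c _ => ?_
  rw [Matrix.mul_apply, Finset.sum_smul]

theorem gmat_one :
    (gmat (fun i => (1 : Matrix (Fin (n i)) (Fin (n i)) k))
      : Module.End R ((i : Fin N) → Fin (n i) → M i)) = 1 := by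
  refine LinearMap.ext fun v => ?_
  funext i a
  show ∑ b, (1 : Matrix (Fin (n i)) (Fin (n i)) k) a b • v i b = v i a
  simp [Matrix.one_apply, ite_smul]

theorem Dmap_gmat
    (hEnd : ∀ i, Function.Bijective
      (fun c : k => (c • (LinearMap.id : Module.End R (M i)))))
    (B : (i : Fin N) → Matrix (Fin (n i)) (Fin (n i)) k) :
    Dmap hEnd (gmat B) = B := by
  funext i
  ext a b
  show entry hEnd (gmat B) i a b = B i a b
  apply entry_eq
  ext x
  show ∑ c, B i a c • (Pi.single i (Pi.single b x) : (i : Fin N) → Fin (n i) → M i) i c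
      = B i a b • x
  simp [Pi.single_eq_same, Pi.single_apply, smul_ite, Finset.sum_ite_eq]

end Aux

/-- Let `M(λ) = ⊕ᵢ M(βᵢ)^{nᵢ}` be a representation of a finite ADE quiver (a module over
its path algebra `R`), where the indecomposables satisfy `Hom(M(βₖ), M(β_l)) = 0` for
`k > l` and `End(M(βᵢ)) ≅ k`.  Then the unit group `End(M(λ))ˣ` surjects onto
`∏ᵢ GLₙᵢ(k)` with unipotent kernel. -/
theorem stmt_13
    {k : Type} [Field k] {R : Type} [Ring R] [Algebra k R]
    (N : ℕ) (M : Fin N → Type)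
    [∀ i, AddCommGroup (M i)] [∀ i, Module R (M i)]
    [∀ i, Module k (M i)] [∀ i, IsScalarTower k R (M i)]
    [∀ i, SMulCommClass R k (M i)]
    -- `End(M(βᵢ)) ≅ k`
    (hEnd : ∀ i, Function.Bijective
      (fun c : k => (c • (LinearMap.id : Module.End R (M i)))))
    -- `Hom(M(βₖ), M(β_l)) = 0` whenever `k > l`
    (hHom : ∀ i j : Fin N, j < i → ∀ f : M i →ₗ[R] M j, f = 0)
    -- the multiplicities
    (n : Fin N → ℕ) :
    ∃ φ : ((Module.End R ((i : Fin N) → Fin (n i) → M i))ˣ) →*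
        ((i : Fin N) → Matrix.GeneralLinearGroup (Fin (n i)) k),
      Function.Surjective φ ∧
      ∀ u : (Module.End R ((i : Fin N) → Fin (n i) → M i))ˣ,
        φ u = 1 → ∃ nl : Module.End R ((i : Fin N) → Fin (n i) → M i),
          IsNilpotent nl ∧ (u : Module.End R ((i : Fin N) → Fin (n i) → M i)) = 1 + nl := by
  classical
  refine ⟨{
    toFun := fun u => fun i =>
      ⟨Dmap hEnd (↑u) i, Dmap hEnd (↑u⁻¹) i, ?_, ?_⟩
    map_one' := ?_
    map_mul' := ?_ }, ?_, ?_⟩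
  · rw [← Pi.mul_apply, ← Dmap_mul hEnd hHom, Units.mul_inv, Dmap_one hEnd, Pi.one_apply]
  · rw [← Pi.mul_apply, ← Dmap_mul hEnd hHom, Units.inv_mul, Dmap_one hEnd, Pi.one_apply]
  · funext i
    refine Units.ext ?_
    show Dmap hEnd ((1 : (Module.End R ((i : Fin N) → Fin (n i) → M i))ˣ)
      : Module.End R ((i : Fin N) → Fin (n i) → M i)) i = _
    rw [Units.val_one, Dmap_one hEnd]
    simp
  · intro u v
    funext i
    refine Units.ext ?_
    simp only [Pi.mul_apply, Units.val_mul]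
    show Dmap hEnd ((u * v : (Module.End R ((i : Fin N) → Fin (n i) → M i))ˣ)
        : Module.End R ((i : Fin N) → Fin (n i) → M i)) i
      = Dmap hEnd ((u : (Module.End R ((i : Fin N) → Fin (n i) → M i))ˣ)
        : Module.End R ((i : Fin N) → Fin (n i) → M i)) i
      * Dmap hEnd ((v : (Module.End R ((i : Fin N) → Fin (n i) → M i))ˣ)
        : Module.End R ((i : Fin N) → Fin (n i) → M i)) i
    rw [Units.val_mul, Dmap_mul hEnd hHom, Pi.mul_apply]
  · -- surjectivity
    intro A
    refine ⟨⟨gmat (fun i => (A i : Matrix (Fin (n i)) (Fin (n i)) k)),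
      gmat (fun i => (((A i)⁻¹ : Matrix.GeneralLinearGroup (Fin (n i)) k)
        : Matrix (Fin (n i)) (Fin (n i)) k)), ?_, ?_⟩, ?_⟩
    · rw [gmat_mul, show (fun i => ((A i : Matrix (Fin (n i)) (Fin (n i)) k)
          * (((A i)⁻¹ : Matrix.GeneralLinearGroup (Fin (n i)) k)
            : Matrix (Fin (n i)) (Fin (n i)) k)))
        = fun i => (1 : Matrix (Fin (n i)) (Fin (n i)) k) from
        funext fun i => (A i).mul_inv, gmat_one]
    · rw [gmat_mul, show (fun i => ((((A i)⁻¹ : Matrix.GeneralLinearGroup (Fin (n i)) k)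
            : Matrix (Fin (n i)) (Fin (n i)) k)
          * (A i : Matrix (Fin (n i)) (Fin (n i)) k)))
        = fun i => (1 : Matrix (Fin (n i)) (Fin (n i)) k) from
        funext fun i => (A i).inv_mul, gmat_one]
    · funext i
      refine Units.ext ?_
      show Dmap hEnd (gmat (fun i => (A i : Matrix (Fin (n i)) (Fin (n i)) k))) i
        = (A i : Matrix (Fin (n i)) (Fin (n i)) k)
      rw [Dmap_gmat hEnd]
  · -- kernel
    intro u hu
    set nl : Module.End R ((i : Fin N) → Fin (n i) → M i) :=
      ((u : Module.End R ((i : Fin N) → Fin (n i) → M i)) - 1) with hnl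
    have hD : Dmap hEnd (u : Module.End R ((i : Fin N) → Fin (n i) → M i)) = 1 := by
      funext i
      have := congrFun hu i
      exact congrArg Units.val this
    have hdiag : ∀ (i : Fin N) (a b : Fin (n i)), bcomp nl i i a b = 0 := by
      intro i a b
      rw [hnl, bcomp_sub, bcomp_diag hEnd (u : Module.End R ((i : Fin N) → Fin (n i) → M i)) i a b, bcomp_one_diag (k := k) i a b]
      have h1 : entry hEnd (↑u : Module.End R ((i : Fin N) → Fin (n i) → M i)) i a b
          = (if a = b then (1 : k) else 0) := by
        have := congrFun hD i
        have h2 := congrFun (congrFun this a) b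
        simp only [Pi.one_apply, Matrix.one_apply] at h2
        exact h2
      rw [h1, sub_self]
    have key : ∀ (m : ℕ) (i j : Fin N), (i : ℕ) < (j : ℕ) + m →
        ∀ (a : Fin (n i)) (b : Fin (n j)), bcomp (nl ^ m) i j a b = 0 := by
      intro m
      induction m with
      | zero =>
        intro i j h a b
        have hij : i ≠ j := Fin.ne_of_lt (by exact_mod_cast h)
        ext x
        show (1 : Module.End R ((i : Fin N) → Fin (n i) → M i))
          (Pi.single j (Pi.single b x)) i a = 0
        rw [Module.End.one_apply, Pi.single_eq_of_ne hij]
        rfl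
      | succ m ih =>
        intro i j h a b
        ext x
        rw [pow_succ', LinearMap.zero_apply]
        rw [show (bcomp (nl * nl ^ m) i j a b) x
          = ∑ l, ∑ c : Fin (n l), bcomp nl i l a c (bcomp (nl ^ m) l j c b x) from
          bcomp_mul nl (nl ^ m) i j a b x]
        refine Finset.sum_eq_zero fun l _ => Finset.sum_eq_zero fun c _ => ?_
        by_cases hl : (l : ℕ) < (j : ℕ) + m
        · rw [ih l j hl c b, LinearMap.zero_apply, map_zero]
        · have hil : (i : ℕ) ≤ (l : ℕ) := by omega
          rcases eq_or_lt_of_le hil with heq | hlt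
          · have : i = l := Fin.ext heq
            subst this
            rw [hdiag i a c, LinearMap.zero_apply]
          · rw [bcomp_lt hHom nl (by exact_mod_cast hlt) a c, LinearMap.zero_apply]
    refine ⟨nl, ⟨N, ?_⟩, by rw [hnl]; abel⟩
    refine LinearMap.ext fun v => ?_
    funext i a
    rw [LinearMap.zero_apply, Pi.zero_apply, Pi.zero_apply,
      apply_eq_sum (nl ^ N) v i a]
    refine Finset.sum_eq_zero fun j _ => Finset.sum_eq_zero fun c _ => ?_
    rw [key N i j (by omega) a c, LinearMap.zero_apply]
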